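/- Fix an integer r ≥ 2 and n ≥ 4. Then z_{n+1} = x_1^{−c_n} · x_2^{−c_{n−1}} · Σ_{V ⊆ [1, c_{n−1}]} Σ_{h ∈ ℤ} C(c_n − |f(V)|, h) · x_1^{r·|V|} · x_2^{r·(c_n − |f(V)| − h)}, where for integers A, B the generalized binomial coefficient C(A,B) equals (Π_{i=0}^{B−1}(A−i))/B! if B > 0, equals 1 if B = 0, and equals 0 if B < 0. -/

import Mathlib

open scoped Classical

namespace CF

noncomputable section

/-- The sequence `c` : `c 1 = 0`, `c 2 = 1`, `c n = r * c (n-1) - c (n-2)`.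
(The value `c 0 = -1` is the unique value consistent with the recurrence.) -/
def c (r : ℕ) : ℕ → ℤ
  | 0 => -1
  | 1 => 0
  | n + 2 => (r : ℤ) * c r (n + 1) - c r n

/-- `c` as a natural number (valid for indices `≥ 1` when `r ≥ 2`). -/
def cN (r n : ℕ) : ℕ := (c r n).toNat

/-- Height (y-coordinate) of the vertex `w_k` of the maximal Dyck path `D_n`:
the maximal Dyck path from `(0,0)` to `(c_{n-1}-c_{n-2}, c_{n-2})` weakly below the
diagonal has `w_k = (k - ⌊k·c_{n-2}/c_{n-1}⌋, ⌊k·c_{n-2}/c_{n-1}⌋)`. -/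
def hgt (r n k : ℕ) : ℕ := k * cN r (n - 2) / cN r (n - 1)

/-- The edge `α_j` of `D_n` is vertical (a north step). -/
def isVert (r n j : ℕ) : Prop := hgt r n (j - 1) < hgt r n j

/-- Index in the vertex sequence `w_0, …, w_{c_{n-1}}` of the vertex `v_j`
(the upper endpoint of the `j`-th vertical edge); `vpos r n 0 = 0`. -/
def vpos (r n j : ℕ) : ℕ := (j * cN r (n - 1) + cN r (n - 2) - 1) / cN r (n - 2)

/-- x-coordinate of the vertex `v_j` of `D_n` (its y-coordinate is `j`). -/
def vx (r n j : ℕ) : ℤ := (vpos r n j : ℤ) - (j : ℤ)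

/-- The slope `s_{i,t}` between `v_i` and `v_t` is at most the slope `s` of the diagonal,
expressed by cross-multiplication. -/
def slopeLE (r n i t : ℕ) : Prop :=
  ((t : ℤ) - (i : ℤ)) * (c r (n - 1) - c r (n - 2)) ≤ (vx r n t - vx r n i) * c r (n - 2)

/-- `{t | i < t ≤ k, s_{i,t} > s}`. -/
def badSet (r n i k : ℕ) : Finset ℕ :=
  (Finset.Icc (i + 1) k).filter fun t => ¬ slopeLE r n i t

/-- `α(i,k)` is blue: `s_{i,t} ≤ s` for all `i < t ≤ k`. -/
def isBlue (r n i k : ℕ) : Prop := badSet r n i k = ∅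

/-- `t₀` is the minimum of `{t | i < t ≤ k, s_{i,t} > s}`. -/
def minBad (r n i k t₀ : ℕ) : Prop :=
  t₀ ∈ badSet r n i k ∧ ∀ t ∈ badSet r n i k, t₀ ≤ t

/-- `α(i,k)` is `(m,w)`-green: the minimum `t₀` of `{t | i < t ≤ k, s_{i,t} > s}` exists and
equals `i + c_m - w·c_{m-1}`, with `3 ≤ m ≤ n-2` and `1 ≤ w < r-1`. -/
def isGreenMW (r n i k m w : ℕ) : Prop :=
  3 ≤ m ∧ m + 2 ≤ n ∧ 1 ≤ w ∧ (w : ℤ) < (r : ℤ) - 1 ∧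
    ∃ t₀ : ℕ, minBad r n i k t₀ ∧ (t₀ : ℤ) = (i : ℤ) + (c r m - (w : ℤ) * c r (m - 1))

def isGreen (r n i k : ℕ) : Prop := ∃ m w, isGreenMW r n i k m w

/-- `α(i,k)` is red: neither blue nor green. -/
def isRed (r n i k : ℕ) : Prop := ¬ isBlue r n i k ∧ ¬ isGreen r n i k

/-- An element of `P(D_n)`: either a single edge `α_j` (`Sum.inl j`) or a subpath
`α(i,k)` (`Sum.inr (i,k)`). -/
abbrev Elt := ℕ ⊕ ℕ × ℕ

/-- The set of (indices of) edges of `D_n` constituting an element of `P(D_n)`: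
a single edge; for `α(i,k)`, the edges from `v_i` (or from its immediate predecessor,
in the red case) to `v_k`. -/
def edges (r n : ℕ) : Elt → Finset ℕ
  | Sum.inl j => {j}
  | Sum.inr (i, k) =>
      if isRed r n i k then Finset.Icc (vpos r n i) (vpos r n k)
      else Finset.Icc (vpos r n i + 1) (vpos r n k)

/-- Validity of an element of `P(D_n)`: `1 ≤ j ≤ c_{n-1}` for a single edge,
`0 ≤ i < k ≤ c_{n-2}` for a subpath `α(i,k)`. -/
def validElt (r n : ℕ) : Elt → Prop
  | Sum.inl j => 1 ≤ j ∧ (j : ℤ) ≤ c r (n - 1)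
  | Sum.inr (i, k) => i < k ∧ (k : ℤ) ≤ c r (n - 2)

/-- The common conditions on a collection `β = {β_1,…,β_t}` of elements of `P(D_n)`:
all elements are valid, distinct elements share no edge, and for any two subpaths
`α(i,k)`, `α(i',k')` one has `i ≠ k'` and `i' ≠ k`. -/
def validColl (r n : ℕ) (β : Finset Elt) : Prop :=
  (∀ p ∈ β, validElt r n p) ∧
  (∀ p ∈ β, ∀ q ∈ β, p ≠ q → Disjoint (edges r n p) (edges r n q)) ∧
  (∀ i k i' k' : ℕ, Sum.inr (i, k) ∈ β → Sum.inr (i', k') ∈ β → i ≠ k' ∧ i' ≠ k)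

/-- The `c_{m-1} - w·c_{m-2}` edges of `D_n` immediately preceding the vertex `v_i`. -/
def precEdges (r n i m w : ℕ) : Finset ℕ :=
  Finset.Icc (vpos r n i + 1 - (c r (m - 1) - (w : ℤ) * c r (m - 2)).toNat) (vpos r n i)

/-- The set `F(D_n)`. -/
def FD (r n : ℕ) : Set (Finset Elt) :=
  {β | validColl r n β ∧
    ∀ i k m w : ℕ, Sum.inr (i, k) ∈ β → isGreenMW r n i k m w →
      ∃ e ∈ precEdges r n i m w, ∃ p ∈ β, e ∈ edges r n p}

/-- The set `F̃(D_n)`. -/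
def Ftilde (r n : ℕ) : Set (Finset Elt) := {β | validColl r n β}

/-- The set `T^{≥u}(D_n)`. -/
def Tge (r n u : ℕ) : Set (Finset Elt) :=
  {β | validColl r n β ∧ β.Nonempty ∧
    ∃ i k m w : ℕ, u ≤ m ∧ Sum.inr (i, k) ∈ β ∧ isGreenMW r n i k m w ∧
      ∀ e ∈ precEdges r n i m w, ∀ p ∈ β, e ∉ edges r n p}

/-- `|β_j|_1` for a single element. -/
def wt1 : Elt → ℕ
  | Sum.inl _ => 0
  | Sum.inr (i, k) => k - i

/-- `|β|_1`. -/
def B1 (β : Finset Elt) : ℕ := ∑ p ∈ β, wt1 p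

/-- `|β|_2`: the total number of edges in the collection `β`. -/
def B2 (r n : ℕ) (β : Finset Elt) : ℕ := (β.biUnion (edges r n)).card

/-- The field `ℚ(x₁,x₂)`. -/
abbrev K := FractionRing (MvPolynomial (Fin 2) ℚ)

/-- The indeterminate `x₁`. -/
def x₁ : K := algebraMap (MvPolynomial (Fin 2) ℚ) K (MvPolynomial.X 0)

/-- The indeterminate `x₂`. -/
def x₂ : K := algebraMap (MvPolynomial (Fin 2) ℚ) K (MvPolynomial.X 1)

/-- `b_{n-1,k}`: `r` if the edge `α_k` of `D_n` is horizontal, `r-1` if vertical. -/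
def bseq (r n k : ℕ) : ℕ := if isVert r n k then r - 1 else r

/-- Prefix sums `S e = Σ_{k=1}^{e} b_{n-1,k}`. -/
def S (r n e : ℕ) : ℕ := ∑ k ∈ Finset.Icc 1 e, bseq r n k

/-- The interval `[a,b] ⊆ [1,c_n]` is (the edge set of) a blue or green subpath of `D_{n+1}`. -/
def isBGinterval (r n a b : ℕ) : Prop :=
  ∃ i k : ℕ, i < k ∧ (k : ℤ) ≤ c r (n - 1) ∧ ¬ isRed r (n + 1) i k ∧
    Finset.Icc a b = Finset.Icc (vpos r (n + 1) i + 1) (vpos r (n + 1) k)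

/-- Left endpoints of the maximal interval components of `V`. -/
def starts (V : Finset ℕ) : Finset ℕ := V.filter fun e => e - 1 ∉ V

/-- Right endpoint of the maximal interval component of `V` starting at `e`. -/
def compEnd (V : Finset ℕ) (e : ℕ) : ℕ := sSup {g : ℕ | Finset.Icc e g ⊆ V}

/-- `f_i(V)`: the image of the maximal interval component of `V` starting at `e`. -/
def fcomp (r n : ℕ) (V : Finset ℕ) (e : ℕ) : Finset ℕ :=
  if isBGinterval r n (S r n (e - 1) + 1) (S r n (compEnd V e)) then
    Finset.Icc (S r n (e - 1) + 1) (S r n (compEnd V e))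
  else
    insert (S r n (e - 1)) (Finset.Icc (S r n (e - 1) + 1) (S r n (compEnd V e)))

/-- The map `f` from subsets of `[1,c_{n-1}]` to subsets of `[1,c_n]`. -/
def fmap (r n : ℕ) (V : Finset ℕ) : Finset ℕ := (starts V).biUnion (fcomp r n V)

/-- The pull-back `f*` (of the map `f` one level down, from subsets of `[1,c_{n-2}]`
to subsets of `[1,c_{n-1}]`). -/
def fstar (r n : ℕ) (W : Finset ℕ) : Finset ℕ :=
  ((Finset.Icc 1 (cN r (n - 2))).powerset.filter fun U => fmap r (n - 1) U ⊆ W).biUnion id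

/-- `δ` of a maximal interval component `[e,g]`: `1` if the `w`-th edge of the corresponding
subpath of `D_n` is vertical for some `2 ≤ w ≤ r-1`, and `0` otherwise. -/
def deltaComp (r n e g : ℕ) : ℕ :=
  if ∃ w : ℕ, 2 ≤ w ∧ w ≤ r - 1 ∧ e + w - 1 ≤ g ∧ isVert r n (e + w - 1) then 1 else 0

/-- `δ_V`. -/
def deltaV (r n : ℕ) (V : Finset ℕ) : ℕ :=
  ∑ e ∈ starts V, deltaComp r n e (compEnd V e)

/-- Generalized binomial coefficient for integers `A`, `B`. -/
def gbinom (A B : ℤ) : ℚ :=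
  if B < 0 then 0
  else (∏ i ∈ Finset.range B.toNat, ((A : ℚ) - (i : ℚ))) / (B.toNat.factorial : ℚ)

/-- `z_n` for `n ≥ 4`, given by the sum over `F̃(D_n)`. -/
def zF (r n : ℕ) : K :=
  x₁ ^ (-(c r (n - 1))) * x₂ ^ (-(c r (n - 2))) *
    ∑ᶠ β ∈ Ftilde r n,
      x₁ ^ ((r : ℤ) * (B1 β : ℤ)) * x₂ ^ ((r : ℤ) * (c r (n - 1) - (B2 r n β : ℤ)))

/-- `z_n`, with `z_3 = x_3` (the value `x3` is the cluster variable `x_3`). -/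
def z (r : ℕ) (x3 : K) (n : ℕ) : K := if n = 3 then x3 else zF r n

end

section Aux
variable {r : ℕ}


lemma c_step (hr : 2 ≤ r) : ∀ k : ℕ, 0 ≤ c r (k+1) ∧ c r (k+1) + 1 ≤ c r (k+2) := by
  intro k
  induction k with
  | zero => simp [c]
  | succ k ih =>
    obtain ⟨h0, h1⟩ := ih
    have hr' : (2:ℤ) ≤ (r:ℤ) := by exact_mod_cast hr
    have he : c r (k+1+1) = c r (k+2) := rfl
    constructor
    · omega
    · show c r (k+2) + 1 ≤ (r:ℤ) * c r (k+2) - c r (k+1)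
      nlinarith

lemma c_nonneg (hr : 2 ≤ r) (k : ℕ) (hk : 1 ≤ k) : 0 ≤ c r k := by
  obtain ⟨j, rfl⟩ : ∃ j, k = j + 1 := ⟨k - 1, by omega⟩
  exact (c_step hr j).1

lemma c_one_le (hr : 2 ≤ r) (k : ℕ) (hk : 2 ≤ k) : 1 ≤ c r k := by
  obtain ⟨j, rfl⟩ : ∃ j, k = j + 2 := ⟨k - 2, by omega⟩
  induction j with
  | zero => simp [c]
  | succ j ih =>
    have := (c_step hr (j+1)).2
    have e1 : c r (j+1+2) = c r (j+3) := rfl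
    have e2 : c r (j+1+1) = c r (j+2) := rfl
    omega

lemma c_mono (hr : 2 ≤ r) (k : ℕ) (hk : 1 ≤ k) : c r k + 1 ≤ c r (k+1) := by
  obtain ⟨j, rfl⟩ : ∃ j, k = j + 1 := ⟨k - 1, by omega⟩
  exact (c_step hr j).2

lemma cN_cast (hr : 2 ≤ r) (k : ℕ) (hk : 1 ≤ k) : (cN r k : ℤ) = c r k :=
  Int.toNat_of_nonneg (c_nonneg hr k hk)

lemma cN_pos (hr : 2 ≤ r) (k : ℕ) (hk : 2 ≤ k) : 1 ≤ cN r k := by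
  have := c_one_le hr k hk
  have := cN_cast hr k (by omega)
  omega

lemma cN_mono (hr : 2 ≤ r) (k : ℕ) (hk : 1 ≤ k) : cN r k ≤ cN r (k+1) := by
  have h1 := c_mono hr k hk
  have h2 := cN_cast hr k hk
  have h3 := cN_cast hr (k+1) (by omega)
  omega

lemma cN_rec (hr : 2 ≤ r) (k : ℕ) : cN r (k+2) + cN r (k+4) = r * cN r (k+3) := by
  have h : c r (k+4) = (r:ℤ) * c r (k+3) - c r (k+2) := rfl
  have h2 := cN_cast hr (k+2) (by omega)
  have h3 := cN_cast hr (k+3) (by omega)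
  have h4 := cN_cast hr (k+4) (by omega)
  have : (cN r (k+2) : ℤ) + cN r (k+4) = (r:ℤ) * cN r (k+3) := by
    rw [h2, h3, h4, h]; ring
  exact_mod_cast this

/-- key division identity: `(j*(r*b - a) + b - 1)/b = r*j - j*a/b` for `1 ≤ b`, `a ≤ b`. -/
lemma key_div (a b R j : ℕ) (hb : 1 ≤ b) (hab : a ≤ b) (hR : 1 ≤ R) :
    (j * (R * b - a) + b - 1) / b = R * j - j * a / b := by
  set q := j * a / b with hq
  set s := j * a % b with hs
  have hmod : b * q + s = j * a := Nat.div_add_mod _ _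
  have hslt : s < b := Nat.mod_lt _ (by omega)
  have hqle : q ≤ R * j := by
    calc q = j * a / b := rfl
    _ ≤ j * b / b := Nat.div_le_div_right (Nat.mul_le_mul_left _ hab)
    _ = j := Nat.mul_div_cancel _ (by omega)
    _ ≤ R * j := Nat.le_mul_of_pos_left j (by omega)
  have e1 : j * (R * b - a) = (R * j) * b - j * a := by
    rw [Nat.mul_sub]; ring_nf
  have e2 : (R * j) * b - b * q = b * (R * j - q) := by
    rw [Nat.mul_sub]; ring_nf
  have hble : j * a ≤ (R * j) * b := by
    calc j * a ≤ j * b := Nat.mul_le_mul_left _ hab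
    _ ≤ (R * j) * b := Nat.mul_le_mul_right _ (Nat.le_mul_of_pos_left j (by omega))
  have e3 : j * (R * b - a) + b - 1 = b * (R * j - q) + (b - 1 - s) := by
    rw [e1, ← hmod]
    have hbq : b * q ≤ (R*j) * b := by rw [← hmod] at hble; omega
    rw [show (R*j)*b - (b*q+s) = ((R*j)*b - b*q) - s by omega, e2]
    have : s ≤ b * (R * j - q) + b - 1 := by omega
    omega
  rw [e3, Nat.mul_add_div (by omega), Nat.div_eq_of_lt (by omega), Nat.add_zero]

lemma hgt_mono {n : ℕ} (j k : ℕ) (h : j ≤ k) : hgt r n j ≤ hgt r n k :=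
  Nat.div_le_div_right (Nat.mul_le_mul_right _ h)

lemma hgt_step (hr : 2 ≤ r) {m : ℕ} (k : ℕ) :
    hgt r (m+4) (k+1) ≤ hgt r (m+4) k + 1 := by
  have hab : cN r (m+2) ≤ cN r (m+3) := cN_mono hr (m+2) (by omega)
  show (k+1) * cN r (m+4-2) / cN r (m+4-1) ≤ k * cN r (m+4-2) / cN r (m+4-1) + 1
  have h1 : (k+1) * cN r (m+2) ≤ k * cN r (m+2) + cN r (m+3) := by
    have : (k+1) * cN r (m+2) = k * cN r (m+2) + cN r (m+2) := by ring
    omega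
  calc (k+1) * cN r (m+4-2) / cN r (m+4-1) ≤ (k * cN r (m+2) + cN r (m+3)) / cN r (m+3) :=
        Nat.div_le_div_right h1
    _ = k * cN r (m+2) / cN r (m+3) + 1 := by
        rw [Nat.add_div_right _ (by have := cN_pos hr (m+3) (by omega); omega)]
    _ = k * cN r (m+4-2) / cN r (m+4-1) + 1 := rfl

lemma bseq_add_step (hr : 2 ≤ r) {m : ℕ} (k : ℕ) :
    bseq r (m+4) (k+1) + (hgt r (m+4) (k+1) - hgt r (m+4) k) = r := by
  have hst := hgt_step hr (r := r) (m := m) k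
  have hmo : hgt r (m+4) k ≤ hgt r (m+4) (k+1) := hgt_mono (n := m+4) k (k+1) (by omega)
  unfold bseq isVert
  simp only [show k + 1 - 1 = k from rfl]
  by_cases h : hgt r (m+4) k < hgt r (m+4) (k+1)
  · rw [if_pos h]; omega
  · rw [if_neg h]; omega

lemma S_eq (hr : 2 ≤ r) (j : ℕ) {m : ℕ} : S r (m+4) j + hgt r (m+4) j = r * j := by
  induction j with
  | zero => simp [S, hgt]
  | succ j ih =>
    have : S r (m+4) (j+1) = S r (m+4) j + bseq r (m+4) (j+1) := by
      unfold S
      rw [Finset.sum_Icc_succ_top (by omega)]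
    have hb := bseq_add_step hr (r := r) (m := m) j
    have hmo : hgt r (m+4) j ≤ hgt r (m+4) (j+1) := hgt_mono (n := m+4) j (j+1) (by omega)
    have : S r (m+4) (j+1) + hgt r (m+4) (j+1) =
        S r (m+4) j + hgt r (m+4) j + (bseq r (m+4) (j+1) + (hgt r (m+4) (j+1) - hgt r (m+4) j)) := by
      omega
    rw [this, ih, hb]; ring

lemma S_eq_vpos (hr : 2 ≤ r) {m : ℕ} (j : ℕ) : S r (m+4) j = vpos r (m+5) j := by
  have hb := cN_pos hr (m+3) (by omega)
  have hab : cN r (m+2) ≤ cN r (m+3) := cN_mono hr (m+2) (by omega)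
  have hrec := cN_rec hr (r := r) m
  have hS := S_eq hr (r := r) j (m := m)
  show S r (m+4) j = (j * cN r (m+5-1) + cN r (m+5-2) - 1) / cN r (m+5-2)
  show S r (m+4) j = (j * cN r (m+4) + cN r (m+3) - 1) / cN r (m+3)
  have h4 : cN r (m+4) = r * cN r (m+3) - cN r (m+2) := by omega
  rw [h4, key_div (cN r (m+2)) (cN r (m+3)) r j hb hab (by omega)]
  have : hgt r (m+4) j = j * cN r (m+2) / cN r (m+3) := rfl
  omega

lemma vpos5_eq (j m : ℕ) : vpos r (m+5) j = (j * cN r (m+4) + cN r (m+3) - 1) / cN r (m+3) := rfl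

lemma vpos5_zero (hr : 2 ≤ r) (m : ℕ) : vpos r (m+5) 0 = 0 := by
  rw [vpos5_eq]
  have := cN_pos hr (m+3) (by omega)
  rw [Nat.zero_mul, Nat.zero_add]
  exact Nat.div_eq_of_lt (by omega)

lemma vpos5_succ (hr : 2 ≤ r) (m j : ℕ) : vpos r (m+5) j < vpos r (m+5) (j+1) := by
  rw [vpos5_eq, vpos5_eq]
  have hb := cN_pos hr (m+3) (by omega)
  have hAB : cN r (m+3) ≤ cN r (m+4) := cN_mono hr (m+3) (by omega)
  have h1 : (j+1) * cN r (m+4) + cN r (m+3) - 1 ≥ (j * cN r (m+4) + cN r (m+3) - 1) + cN r (m+3) := by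
    have : (j+1) * cN r (m+4) = j * cN r (m+4) + cN r (m+4) := by ring
    omega
  calc (j * cN r (m+4) + cN r (m+3) - 1) / cN r (m+3)
      < (j * cN r (m+4) + cN r (m+3) - 1) / cN r (m+3) + 1 := by omega
    _ = ((j * cN r (m+4) + cN r (m+3) - 1) + cN r (m+3)) / cN r (m+3) := by
        rw [Nat.add_div_right _ (by omega)]
    _ ≤ ((j+1) * cN r (m+4) + cN r (m+3) - 1) / cN r (m+3) := Nat.div_le_div_right h1

lemma vpos5_mono (hr : 2 ≤ r) (m : ℕ) : StrictMono (vpos r (m+5)) :=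
  strictMono_nat_of_lt_succ (vpos5_succ hr m)

lemma vpos5_ge (hr : 2 ≤ r) (m j : ℕ) : j ≤ vpos r (m+5) j := by
  induction j with
  | zero => omega
  | succ j ih => have := vpos5_succ hr m j; omega

lemma vpos5_top (hr : 2 ≤ r) (m : ℕ) : vpos r (m+5) (cN r (m+3)) = cN r (m+4) := by
  rw [vpos5_eq]
  have hb := cN_pos hr (m+3) (by omega)
  have h1 : cN r (m+3) * cN r (m+4) + cN r (m+3) - 1
      = cN r (m+3) * cN r (m+4) + (cN r (m+3) - 1) := by omega
  rw [h1, Nat.mul_add_div (by omega), Nat.div_eq_of_lt (by omega), Nat.add_zero]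

lemma vpos5_le_top (hr : 2 ≤ r) (m j : ℕ) (hj : j ≤ cN r (m+3)) :
    vpos r (m+5) j ≤ cN r (m+4) := by
  rcases Nat.eq_or_lt_of_le hj with h | h
  · rw [h, vpos5_top hr m]
  · have := (vpos5_mono hr m) h
    rw [vpos5_top hr m] at this; omega

lemma vpos5_mul_ge (hr : 2 ≤ r) (m j : ℕ) :
    j * cN r (m+4) ≤ vpos r (m+5) j * cN r (m+3) := by
  rw [vpos5_eq]
  have hb := cN_pos hr (m+3) (by omega)
  set x := j * cN r (m+4) with hx
  set B := cN r (m+3) with hB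
  have hmod : B * ((x + B - 1)/B) + (x + B - 1) % B = x + B - 1 := Nat.div_add_mod _ _
  have hlt : (x + B - 1) % B < B := Nat.mod_lt _ (by omega)
  set q := (x + B - 1)/B
  have : x ≤ B * q := by omega
  calc x ≤ B * q := this
    _ = q * B := Nat.mul_comm _ _

lemma slope0 (hr : 2 ≤ r) (m t : ℕ) : slopeLE r (m+5) 0 t := by
  unfold slopeLE vx
  have e1 : c r (m+5-1) = c r (m+4) := rfl
  have e2 : c r (m+5-2) = c r (m+3) := rfl
  rw [e1, e2, vpos5_zero hr m]
  have h := vpos5_mul_ge hr m t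
  have h3 := cN_cast hr (m+3) (by omega)
  have h4 := cN_cast hr (m+4) (by omega)
  have hz : (t:ℤ) * (cN r (m+4) : ℤ) ≤ (vpos r (m+5) t : ℤ) * (cN r (m+3) : ℤ) := by
    exact_mod_cast h
  push_cast
  nlinarith [hz, h3, h4]

lemma isBlue0 (hr : 2 ≤ r) (m k : ℕ) : isBlue r (m+5) 0 k := by
  unfold isBlue badSet
  rw [Finset.filter_eq_empty_iff]
  intro t _
  simp only [not_not]
  exact slope0 hr m t

lemma notRed0 (hr : 2 ≤ r) (m k : ℕ) : ¬ isRed r (m+5) 0 k := by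
  intro h
  exact h.1 (isBlue0 hr m k)


section Comp
variable {C : ℕ} {V : Finset ℕ}

lemma mem_starts {e : ℕ} : e ∈ starts V ↔ e ∈ V ∧ e - 1 ∉ V := by
  unfold starts; simp

lemma start_one_le (hV : V ⊆ Finset.Icc 1 C) {e : ℕ} (he : e ∈ starts V) : 1 ≤ e := by
  have := hV (mem_starts.1 he).1
  simp only [Finset.mem_Icc] at this; omega

lemma compEnd_bdd (hV : V ⊆ Finset.Icc 1 C) {e : ℕ} (he : e ∈ V) :
    BddAbove {g : ℕ | Finset.Icc e g ⊆ V} := by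
  refine ⟨C, fun g hg => ?_⟩
  by_cases h : e ≤ g
  · have : g ∈ V := hg (Finset.mem_Icc.2 ⟨h, le_refl g⟩)
    have := hV this; simp only [Finset.mem_Icc] at this; omega
  · have := hV he; simp only [Finset.mem_Icc] at this; omega

lemma compEnd_spec (hV : V ⊆ Finset.Icc 1 C) {e : ℕ} (he : e ∈ V) {g : ℕ}
    (hg : Finset.Icc e g ⊆ V) : g ≤ compEnd V e :=
  le_csSup (compEnd_bdd hV he) hg

lemma le_compEnd (hV : V ⊆ Finset.Icc 1 C) {e : ℕ} (he : e ∈ V) : e ≤ compEnd V e :=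
  compEnd_spec hV he (by intro x hx; simp only [Finset.mem_Icc] at hx; rwa [show x = e by omega])

lemma compEnd_subset (hV : V ⊆ Finset.Icc 1 C) {e : ℕ} (he : e ∈ V) :
    Finset.Icc e (compEnd V e) ⊆ V := by
  have hne : ({g : ℕ | Finset.Icc e g ⊆ V}).Nonempty := by
    refine ⟨e, ?_⟩
    intro x hx; simp only [Finset.mem_Icc] at hx; rwa [show x = e by omega]
  exact Nat.sSup_mem hne (compEnd_bdd hV he)

lemma compEnd_le (hV : V ⊆ Finset.Icc 1 C) {e : ℕ} (he : e ∈ V) : compEnd V e ≤ C := by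
  have := hV (compEnd_subset hV he (Finset.mem_Icc.2 ⟨le_compEnd hV he, le_refl _⟩))
  simp only [Finset.mem_Icc] at this; omega

lemma compEnd_succ_not (hV : V ⊆ Finset.Icc 1 C) {e : ℕ} (he : e ∈ V) :
    compEnd V e + 1 ∉ V := by
  intro hmem
  have h1 : Finset.Icc e (compEnd V e + 1) ⊆ V := by
    intro x hx
    simp only [Finset.mem_Icc] at hx
    by_cases h : x ≤ compEnd V e
    · exact compEnd_subset hV he (Finset.mem_Icc.2 ⟨hx.1, h⟩)
    · rwa [show x = compEnd V e + 1 by omega]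
  have := compEnd_spec hV he h1
  omega

lemma cover (hV : V ⊆ Finset.Icc 1 C) {x : ℕ} (hx : x ∈ V) :
    ∃ e ∈ starts V, e ≤ x ∧ x ≤ compEnd V e := by
  have hne : ∃ y, Finset.Icc y x ⊆ V := ⟨x, by
    intro z hz; simp only [Finset.mem_Icc] at hz; rwa [show z = x by omega]⟩
  classical
  set e := Nat.find hne with hedef
  have hspec : Finset.Icc e x ⊆ V := Nat.find_spec hne
  have hex : e ≤ x := Nat.find_le (by
    intro z hz; simp only [Finset.mem_Icc] at hz; rwa [show z = x by omega])
  have heV : e ∈ V := hspec (Finset.mem_Icc.2 ⟨le_refl _, hex⟩)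
  have he1 : 1 ≤ e := by
    have := hV heV; simp only [Finset.mem_Icc] at this; omega
  have hprev : e - 1 ∉ V := by
    intro hm
    have : Finset.Icc (e-1) x ⊆ V := by
      intro z hz
      simp only [Finset.mem_Icc] at hz
      by_cases h : e ≤ z
      · exact hspec (Finset.mem_Icc.2 ⟨h, hz.2⟩)
      · rwa [show z = e - 1 by omega]
    have : Nat.find hne ≤ e - 1 := Nat.find_le this
    omega
  exact ⟨e, mem_starts.2 ⟨heV, hprev⟩, hex, compEnd_spec hV heV hspec⟩

lemma starts_gap (hV : V ⊆ Finset.Icc 1 C) {e e' : ℕ} (he : e ∈ starts V)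
    (he' : e' ∈ starts V) (hlt : e < e') : compEnd V e + 2 ≤ e' := by
  obtain ⟨heV, -⟩ := mem_starts.1 he
  obtain ⟨he'V, he'p⟩ := mem_starts.1 he'
  have h1 : compEnd V e < e' - 1 := by
    by_contra h
    have : e' - 1 ∈ Finset.Icc e (compEnd V e) := Finset.mem_Icc.2 ⟨by omega, by omega⟩
    exact he'p (compEnd_subset hV heV this)
  have := start_one_le hV he
  omega

lemma starts_disj (hV : V ⊆ Finset.Icc 1 C) {e e' : ℕ} (he : e ∈ starts V)
    (he' : e' ∈ starts V) (hne : e ≠ e') :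
    Disjoint (Finset.Icc e (compEnd V e)) (Finset.Icc e' (compEnd V e')) := by
  rcases Nat.lt_or_ge e e' with h | h
  · have := starts_gap hV he he' h
    rw [Finset.disjoint_left]
    intro x hx hx'
    simp only [Finset.mem_Icc] at hx hx'
    omega
  · have hlt : e' < e := by omega
    have := starts_gap hV he' he hlt
    rw [Finset.disjoint_left]
    intro x hx hx'
    simp only [Finset.mem_Icc] at hx hx'
    omega

lemma V_partition (hV : V ⊆ Finset.Icc 1 C) :
    V = (starts V).biUnion (fun e => Finset.Icc e (compEnd V e)) := by
  apply Finset.Subset.antisymm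
  · intro x hx
    obtain ⟨e, he, h1, h2⟩ := cover hV hx
    exact Finset.mem_biUnion.2 ⟨e, he, Finset.mem_Icc.2 ⟨h1, h2⟩⟩
  · intro x hx
    obtain ⟨e, he, hxe⟩ := Finset.mem_biUnion.1 hx
    exact compEnd_subset hV (mem_starts.1 he).1 hxe

lemma V_card (hV : V ⊆ Finset.Icc 1 C) :
    V.card = ∑ e ∈ starts V, (compEnd V e + 1 - e) := by
  conv_lhs => rw [V_partition hV]
  rw [Finset.card_biUnion (fun e he e' he' hne => starts_disj hV he he' hne)]
  apply Finset.sum_congr rfl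
  intro e he
  rw [Nat.card_Icc]

end Comp


section Path
variable {r : ℕ}

lemma Icc_eq_Icc {a b c d : ℕ} (hab : a ≤ b) (h : Finset.Icc a b = Finset.Icc c d) :
    a = c ∧ b = d := by
  have h1 : a ∈ Finset.Icc c d := h ▸ Finset.mem_Icc.2 ⟨le_refl _, hab⟩
  have h2 : b ∈ Finset.Icc c d := h ▸ Finset.mem_Icc.2 ⟨hab, le_refl _⟩
  have hcd : c ≤ d := by simp only [Finset.mem_Icc] at h1; omega
  have h3 : c ∈ Finset.Icc a b := h ▸ Finset.mem_Icc.2 ⟨le_refl _, hcd⟩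
  have h4 : d ∈ Finset.Icc a b := h ▸ Finset.mem_Icc.2 ⟨hcd, le_refl _⟩
  simp only [Finset.mem_Icc] at h1 h2 h3 h4
  omega

lemma edges_inr (n i k : ℕ) : edges r n (Sum.inr (i, k)) =
    (if isRed r n i k then Finset.Icc (vpos r n i) (vpos r n k)
     else Finset.Icc (vpos r n i + 1) (vpos r n k)) := rfl

lemma isBG_iff (hr : 2 ≤ r) (m : ℕ) {i k : ℕ} (hik : i < k) (hk : k ≤ cN r (m+3)) :
    isBGinterval r (m+4) (vpos r (m+5) i + 1) (vpos r (m+5) k) ↔ ¬ isRed r (m+5) i k := by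
  constructor
  · rintro ⟨i', k', h1, h2, h3, h4⟩
    simp only [show m+4+1 = m+5 from rfl, show m+4-1 = m+3 from rfl] at h1 h2 h3 h4
    have hmono := vpos5_mono hr m
    have hne : vpos r (m+5) i + 1 ≤ vpos r (m+5) k := hmono hik
    obtain ⟨ha, hb⟩ := Icc_eq_Icc hne h4
    have hi : i = i' := hmono.injective (by omega)
    have hk2 : k = k' := hmono.injective hb
    rwa [hi, hk2]
  · intro h
    refine ⟨i, k, hik, ?_, h, rfl⟩
    rw [show m+4-1 = m+3 from rfl, ← cN_cast hr (m+3) (by omega)]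
    exact_mod_cast hk

lemma red_pos (hr : 2 ≤ r) (m : ℕ) {i k : ℕ} (h : isRed r (m+5) i k) : 1 ≤ i := by
  by_contra hc
  exact notRed0 hr m k (by rwa [show i = 0 by omega] at h)

lemma edges_inr_subset (hr : 2 ≤ r) (m : ℕ) {i k : ℕ} (hik : i < k) :
    edges r (m+5) (Sum.inr (i, k)) ⊆ Finset.Icc (vpos r (m+5) i) (vpos r (m+5) k) := by
  rw [edges_inr]
  by_cases h : isRed r (m+5) i k
  · rw [if_pos h]
  · rw [if_neg h]
    intro x hx; simp only [Finset.mem_Icc] at hx ⊢; omega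

lemma edges_inr_bounds (hr : 2 ≤ r) (m : ℕ) {i k : ℕ} (hik : i < k) (hk : k ≤ cN r (m+3)) :
    edges r (m+5) (Sum.inr (i, k)) ⊆ Finset.Icc 1 (cN r (m+4)) := by
  intro x hx
  have hup : x ≤ vpos r (m+5) k := by
    have := edges_inr_subset hr m hik hx
    simp only [Finset.mem_Icc] at this; exact this.2
  have hub : vpos r (m+5) k ≤ cN r (m+4) := vpos5_le_top hr m k hk
  rw [edges_inr] at hx
  by_cases h : isRed r (m+5) i k
  · rw [if_pos h] at hx
    simp only [Finset.mem_Icc] at hx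
    have hi1 : 1 ≤ i := red_pos hr m h
    have : vpos r (m+5) 0 < vpos r (m+5) i := vpos5_mono hr m (by omega)
    rw [vpos5_zero hr m] at this
    simp only [Finset.mem_Icc]; omega
  · rw [if_neg h] at hx
    simp only [Finset.mem_Icc] at hx
    simp only [Finset.mem_Icc]; omega

lemma fcomp_eq (hr : 2 ≤ r) (m : ℕ) {V : Finset ℕ} (hV : V ⊆ Finset.Icc 1 (cN r (m+3)))
    {e : ℕ} (he : e ∈ starts V) :
    fcomp r (m+4) V e = edges r (m+5) (Sum.inr (e - 1, compEnd V e)) := by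
  have he1 : 1 ≤ e := start_one_le hV he
  have heV : e ∈ V := (mem_starts.1 he).1
  have hik : e - 1 < compEnd V e := by have := le_compEnd hV heV; omega
  have hkC : compEnd V e ≤ cN r (m+3) := compEnd_le hV heV
  have hS1 : S r (m+4) (e-1) = vpos r (m+5) (e-1) := S_eq_vpos hr (e-1)
  have hS2 : S r (m+4) (compEnd V e) = vpos r (m+5) (compEnd V e) := S_eq_vpos hr _
  unfold fcomp
  rw [edges_inr, hS1, hS2]
  by_cases h : isRed r (m+5) (e-1) (compEnd V e)
  · rw [if_neg (by rw [isBG_iff hr m hik hkC]; exact fun hh => hh h), if_pos h]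
    have hle : vpos r (m+5) (e-1) ≤ vpos r (m+5) (compEnd V e) := le_of_lt (vpos5_mono hr m hik)
    rw [Finset.Icc_add_one_left_eq_Ioc, Finset.Ioc_insert_left hle]
  · rw [if_pos ((isBG_iff hr m hik hkC).2 h), if_neg h]

noncomputable def pathOf (V : Finset ℕ) : Finset Elt :=
  V.filter (fun e => e - 1 ∉ V) |>.image (fun e => Sum.inr (e - 1, compEnd V e))

lemma pathOf_eq (V : Finset ℕ) :
    pathOf V = (starts V).image (fun e => Sum.inr (e - 1, compEnd V e)) := rfl

lemma fmap_eq (hr : 2 ≤ r) (m : ℕ) {V : Finset ℕ} (hV : V ⊆ Finset.Icc 1 (cN r (m+3))) :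
    fmap r (m+4) V = (pathOf V).biUnion (edges r (m+5)) := by
  unfold fmap
  rw [pathOf_eq]
  ext x
  simp only [Finset.mem_biUnion, Finset.mem_image]
  constructor
  · rintro ⟨e, he, hx⟩
    exact ⟨Sum.inr (e-1, compEnd V e), ⟨e, he, rfl⟩, by rwa [← fcomp_eq hr m hV he]⟩
  · rintro ⟨p, ⟨e, he, rfl⟩, hx⟩
    exact ⟨e, he, by rwa [fcomp_eq hr m hV he]⟩

end Path


section Bij
variable {r : ℕ}

noncomputable def decodeV (β : Finset Elt) : Finset ℕ :=
  β.biUnion (fun p => match p with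
    | Sum.inl _ => ∅
    | Sum.inr (i, k) => Finset.Icc (i+1) k)

noncomputable def decodeE (β : Finset Elt) : Finset ℕ :=
  β.biUnion (fun p => match p with
    | Sum.inl j => {j}
    | Sum.inr _ => ∅)

noncomputable def Phi (V E : Finset ℕ) : Finset Elt := pathOf V ∪ E.image Sum.inl

lemma edges_inl (n j : ℕ) : edges r n (Sum.inl j) = {j} := rfl

lemma mem_pathOf {V : Finset ℕ} {p : Elt} :
    p ∈ pathOf V ↔ ∃ e ∈ starts V, p = Sum.inr (e - 1, compEnd V e) := by
  rw [pathOf_eq]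
  simp [eq_comm]

lemma edges_inr_supset {m i k : ℕ} :
    Finset.Icc (vpos r (m+5) i + 1) (vpos r (m+5) k) ⊆ edges r (m+5) (Sum.inr (i, k)) := by
  rw [edges_inr]
  by_cases h : isRed r (m+5) i k
  · rw [if_pos h]
    intro x hx; simp only [Finset.mem_Icc] at hx ⊢; omega
  · rw [if_neg h]

lemma B1_pathOf {C : ℕ} {V : Finset ℕ} (hV : V ⊆ Finset.Icc 1 C) :
    ∑ p ∈ pathOf V, wt1 p = V.card := by
  rw [pathOf_eq, Finset.sum_image]
  · rw [V_card hV]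
    apply Finset.sum_congr rfl
    intro e he
    have h1 := start_one_le hV he
    have h2 := le_compEnd hV (mem_starts.1 he).1
    show compEnd V e - (e - 1) = compEnd V e + 1 - e
    omega
  · intro e he e' he' h
    have h1 := start_one_le hV he
    have h2 := start_one_le hV he'
    simp only [Sum.inr.injEq, Prod.mk.injEq] at h
    omega

lemma pathOf_disj (hr : 2 ≤ r) (m : ℕ) {V : Finset ℕ} (hV : V ⊆ Finset.Icc 1 (cN r (m+3)))
    {p q : Elt} (hp : p ∈ pathOf V) (hq : q ∈ pathOf V) (hne : p ≠ q) :
    Disjoint (edges r (m+5) p) (edges r (m+5) q) := by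
  obtain ⟨e, he, rfl⟩ := mem_pathOf.1 hp
  obtain ⟨e', he', rfl⟩ := mem_pathOf.1 hq
  have hene : e ≠ e' := by rintro rfl; exact hne rfl
  have key : ∀ a b : ℕ, a ∈ starts V → b ∈ starts V → a < b →
      Disjoint (edges r (m+5) (Sum.inr (a - 1, compEnd V a)))
        (edges r (m+5) (Sum.inr (b - 1, compEnd V b))) := by
    intro a b ha hb hab
    have hgap := starts_gap hV ha hb hab
    have ha1 := start_one_le hV ha
    have haV := (mem_starts.1 ha).1
    have hbV := (mem_starts.1 hb).1
    have hae := le_compEnd hV haV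
    have hbe := le_compEnd hV hbV
    have hik1 : a - 1 < compEnd V a := by omega
    have hik2 : b - 1 < compEnd V b := by omega
    have hlt : vpos r (m+5) (compEnd V a) < vpos r (m+5) (b - 1) :=
      vpos5_mono hr m (by omega)
    rw [Finset.disjoint_left]
    intro x hx1 hx2
    have b1 := edges_inr_subset hr m hik1 hx1
    have b2 := edges_inr_subset hr m hik2 hx2
    simp only [Finset.mem_Icc] at b1 b2
    omega
  rcases Nat.lt_or_ge e e' with h | h
  · exact key e e' he he' h
  · exact (key e' e he' he (by omega)).symm

lemma starts_of_mem_inr (hr : 2 ≤ r) (m : ℕ) {β : Finset Elt}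
    (hβ : validColl r (m+5) β) {i k : ℕ} (h : Sum.inr (i, k) ∈ β) :
    i + 1 ∈ starts (decodeV β) ∧ compEnd (decodeV β) (i + 1) = k := by
  obtain ⟨hvalid, hdisj, hsep⟩ := hβ
  have hik : i < k := (hvalid _ h).1
  have hsub : decodeV β ⊆ Finset.Icc 1 (cN r (m+3)) := by
    intro x hx
    obtain ⟨p, hp, hxp⟩ := Finset.mem_biUnion.1 hx
    match p with
    | Sum.inl j => simp at hxp
    | Sum.inr (i', k') =>
      have h1 := (hvalid _ hp).1
      have h2 := (hvalid _ hp).2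
      have h2' : k' ≤ cN r (m+3) := by
        have := cN_cast hr (m+3) (by omega)
        have e2 : c r (m+5-2) = c r (m+3) := rfl
        rw [e2] at h2
        omega
      simp only [Finset.mem_Icc] at hxp ⊢
      omega
  -- separation of distinct inr elements
  have sep : ∀ i' k' : ℕ, Sum.inr (i', k') ∈ β → (i', k') ≠ (i, k) → k < i' ∨ k' < i := by
    intro i' k' h' hne
    have hik' : i' < k' := (hvalid _ h').1
    have hne2 : (Sum.inr (i', k') : Elt) ≠ Sum.inr (i, k) := by
      simp only [ne_eq, Sum.inr.injEq]; exact hne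
    have hd := hdisj _ h' _ h hne2
    have hsep1 := (hsep i' k' i k h' h).1
    have hsep2 := (hsep i' k' i k h' h).2
    by_contra hc
    push_neg at hc
    obtain ⟨hc1, hc2⟩ := hc
    -- i' < k and i < k' ; take t = max i i' + 1
    set t := max i i' + 1 with ht
    have h1 : i < t ∧ t ≤ k := by omega
    have h2 : i' < t ∧ t ≤ k' := by omega
    have hx1 : vpos r (m+5) t ∈ edges r (m+5) (Sum.inr (i, k)) := by
      apply edges_inr_supset
      simp only [Finset.mem_Icc]
      exact ⟨vpos5_mono hr m h1.1, (vpos5_mono hr m).le_iff_le.2 h1.2⟩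
    have hx2 : vpos r (m+5) t ∈ edges r (m+5) (Sum.inr (i', k')) := by
      apply edges_inr_supset
      simp only [Finset.mem_Icc]
      exact ⟨vpos5_mono hr m h2.1, (vpos5_mono hr m).le_iff_le.2 h2.2⟩
    exact Finset.disjoint_left.1 hd hx2 hx1
  have hIcc : Finset.Icc (i+1) k ⊆ decodeV β := by
    intro x hx
    exact Finset.mem_biUnion.2 ⟨Sum.inr (i, k), h, hx⟩
  have hiV : i + 1 ∈ decodeV β := hIcc (Finset.mem_Icc.2 ⟨le_refl _, by omega⟩)
  have hinot : i ∉ decodeV β := by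
    intro hi
    obtain ⟨p, hp, hxp⟩ := Finset.mem_biUnion.1 hi
    match p with
    | Sum.inl j => simp at hxp
    | Sum.inr (i', k') =>
      simp only [Finset.mem_Icc] at hxp
      by_cases hc : (i', k') = (i, k)
      · obtain ⟨rfl, rfl⟩ := Prod.mk.injEq .. ▸ hc
        simp only [Prod.mk.injEq] at hc
        omega
      · rcases sep i' k' hp hc with hs | hs
        · have := (hvalid _ hp).1; omega
        · omega
  have hstart : i + 1 ∈ starts (decodeV β) := mem_starts.2 ⟨hiV, by simpa using hinot⟩
  refine ⟨hstart, ?_⟩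
  have hknot : k + 1 ∉ decodeV β := by
    intro hkmem
    obtain ⟨p, hp, hxp⟩ := Finset.mem_biUnion.1 hkmem
    match p with
    | Sum.inl j => simp at hxp
    | Sum.inr (i', k') =>
      simp only [Finset.mem_Icc] at hxp
      by_cases hc : (i', k') = (i, k)
      · simp only [Prod.mk.injEq] at hc
        omega
      · rcases sep i' k' hp hc with hs | hs
        · omega
        · have := (hvalid _ hp).1; omega
  have hle : k ≤ compEnd (decodeV β) (i+1) := compEnd_spec hsub hiV hIcc
  have hge : compEnd (decodeV β) (i+1) ≤ k := by
    by_contra hc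
    push_neg at hc
    have : k + 1 ∈ Finset.Icc (i+1) (compEnd (decodeV β) (i+1)) :=
      Finset.mem_Icc.2 ⟨by omega, by omega⟩
    exact hknot (compEnd_subset hsub hiV this)
  omega

end Bij


section Bij2
variable {r : ℕ}

lemma biUnion_union_aux {α β : Type*} [DecidableEq α] [DecidableEq β] (s t : Finset α)
    (f : α → Finset β) : (s ∪ t).biUnion f = s.biUnion f ∪ t.biUnion f := by
  ext x
  simp only [Finset.mem_biUnion, Finset.mem_union]
  constructor
  · rintro ⟨a, (h | h), hx⟩
    exacts [Or.inl ⟨a, h, hx⟩, Or.inr ⟨a, h, hx⟩]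
  · rintro (⟨a, h, hx⟩ | ⟨a, h, hx⟩)
    exacts [⟨a, Or.inl h, hx⟩, ⟨a, Or.inr h, hx⟩]

lemma decodeV_subset (hr : 2 ≤ r) (m : ℕ) {β : Finset Elt} (hβ : validColl r (m+5) β) :
    decodeV β ⊆ Finset.Icc 1 (cN r (m+3)) := by
  obtain ⟨hvalid, -, -⟩ := hβ
  intro x hx
  obtain ⟨p, hp, hxp⟩ := Finset.mem_biUnion.1 hx
  match p with
  | Sum.inl j => simp at hxp
  | Sum.inr (i', k') =>
    have h1 := (hvalid _ hp).1
    have h2 := (hvalid _ hp).2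
    have h2' : k' ≤ cN r (m+3) := by
      have := cN_cast hr (m+3) (by omega)
      have e2 : c r (m+5-2) = c r (m+3) := rfl
      rw [e2] at h2
      omega
    simp only [Finset.mem_Icc] at hxp ⊢
    omega

lemma pathOf_decodeV (hr : 2 ≤ r) (m : ℕ) {β : Finset Elt} (hβ : validColl r (m+5) β) :
    pathOf (decodeV β) = β.filter (fun p => p.isRight) := by
  have hsub := decodeV_subset hr m hβ
  ext p
  rw [mem_pathOf, Finset.mem_filter]
  constructor
  · rintro ⟨e, he, rfl⟩
    have heV := (mem_starts.1 he).1
    have hprev := (mem_starts.1 he).2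
    obtain ⟨q, hq, hxq⟩ := Finset.mem_biUnion.1 heV
    match q with
    | Sum.inl j => simp at hxq
    | Sum.inr (i, k) =>
      simp only [Finset.mem_Icc] at hxq
      have hei : e = i + 1 := by
        by_contra hc
        have : e - 1 ∈ Finset.Icc (i+1) k := Finset.mem_Icc.2 ⟨by omega, by omega⟩
        exact hprev (Finset.mem_biUnion.2 ⟨Sum.inr (i, k), hq, this⟩)
      obtain ⟨-, hck⟩ := starts_of_mem_inr hr m hβ hq
      subst hei
      rw [hck]
      exact ⟨by simpa using hq, rfl⟩
  · rintro ⟨hp, hright⟩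
    match p with
    | Sum.inl j => simp at hright
    | Sum.inr (i, k) =>
      obtain ⟨hst, hck⟩ := starts_of_mem_inr hr m hβ hp
      exact ⟨i + 1, hst, by rw [hck]; simp⟩

lemma image_inl_decodeE {β : Finset Elt} :
    (decodeE β).image Sum.inl = β.filter (fun p => p.isLeft) := by
  ext p
  simp only [Finset.mem_image, Finset.mem_filter, decodeE, Finset.mem_biUnion]
  constructor
  · rintro ⟨j, ⟨q, hq, hjq⟩, rfl⟩
    match q with
    | Sum.inl j' =>
      simp only [Finset.mem_singleton] at hjq
      subst hjq; exact ⟨hq, rfl⟩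
    | Sum.inr _ => simp at hjq
  · rintro ⟨hp, hleft⟩
    match p with
    | Sum.inl j => exact ⟨j, ⟨Sum.inl j, hp, by simp⟩, rfl⟩
    | Sum.inr _ => simp at hleft

lemma Phi_decode (hr : 2 ≤ r) (m : ℕ) {β : Finset Elt} (hβ : validColl r (m+5) β) :
    Phi (decodeV β) (decodeE β) = β := by
  unfold Phi
  rw [pathOf_decodeV hr m hβ, image_inl_decodeE]
  ext p
  simp only [Finset.mem_union, Finset.mem_filter]
  constructor
  · rintro (⟨h, -⟩ | ⟨h, -⟩) <;> exact h
  · intro hp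
    match p with
    | Sum.inl j => exact Or.inr ⟨hp, rfl⟩
    | Sum.inr q => exact Or.inl ⟨hp, rfl⟩

lemma decodeE_subset (hr : 2 ≤ r) (m : ℕ) {β : Finset Elt} (hβ : validColl r (m+5) β) :
    decodeE β ⊆ Finset.Icc 1 (cN r (m+4)) \ fmap r (m+4) (decodeV β) := by
  obtain ⟨hvalid, hdisj, hsep⟩ := hβ
  intro j hj
  obtain ⟨p, hp, hjp⟩ := Finset.mem_biUnion.1 hj
  match p with
  | Sum.inr q => simp at hjp
  | Sum.inl j' =>
    simp only [Finset.mem_singleton] at hjp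
    subst hjp
    have h1 := (hvalid _ hp).1
    have h2 := (hvalid _ hp).2
    have e1 : c r (m+5-1) = c r (m+4) := rfl
    rw [e1] at h2
    have h2' : j ≤ cN r (m+4) := by
      have := cN_cast hr (m+4) (by omega)
      omega
    rw [Finset.mem_sdiff]
    refine ⟨Finset.mem_Icc.2 ⟨h1, h2'⟩, ?_⟩
    intro hjf
    rw [fmap_eq hr m (decodeV_subset hr m ⟨hvalid, hdisj, hsep⟩)] at hjf
    obtain ⟨q, hq, hjq⟩ := Finset.mem_biUnion.1 hjf
    rw [pathOf_decodeV hr m ⟨hvalid, hdisj, hsep⟩, Finset.mem_filter] at hq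
    have hne : q ≠ Sum.inl j := by
      intro h; subst h; simp at hq
    have := hdisj _ hq.1 _ hp hne
    rw [Finset.disjoint_right] at this
    exact this (by rw [edges_inl]; simp) hjq

lemma pathOf_all_inr {V : Finset ℕ} {p : Elt} (hp : p ∈ pathOf V) : p.isRight := by
  obtain ⟨e, -, rfl⟩ := mem_pathOf.1 hp
  rfl

lemma Phi_disj {V E : Finset ℕ} : Disjoint (pathOf V) (E.image Sum.inl) := by
  rw [Finset.disjoint_left]
  intro p hp hq
  obtain ⟨j, -, rfl⟩ := Finset.mem_image.1 hq
  exact absurd (pathOf_all_inr hp) (by simp)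

lemma decodeV_Phi {C : ℕ} {V : Finset ℕ} (hV : V ⊆ Finset.Icc 1 C) (E : Finset ℕ) :
    decodeV (Phi V E) = V := by
  unfold Phi decodeV
  ext x
  simp only [Finset.mem_biUnion, Finset.mem_union]
  constructor
  · rintro ⟨p, (hp | hp), hxp⟩
    · obtain ⟨e, he, rfl⟩ := mem_pathOf.1 hp
      have he1 := start_one_le hV he
      simp only [Finset.mem_Icc] at hxp
      exact compEnd_subset hV (mem_starts.1 he).1 (Finset.mem_Icc.2 ⟨by omega, hxp.2⟩)
    · obtain ⟨j, -, rfl⟩ := Finset.mem_image.1 hp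
      simp at hxp
  · intro hx
    obtain ⟨e, he, h1, h2⟩ := cover hV hx
    have he1 := start_one_le hV he
    refine ⟨Sum.inr (e - 1, compEnd V e), Or.inl (mem_pathOf.2 ⟨e, he, rfl⟩), ?_⟩
    simp only [Finset.mem_Icc]
    omega

lemma decodeE_Phi {V E : Finset ℕ} : decodeE (Phi V E) = E := by
  unfold Phi decodeE
  ext x
  simp only [Finset.mem_biUnion, Finset.mem_union]
  constructor
  · rintro ⟨p, (hp | hp), hxp⟩
    · obtain ⟨e, -, rfl⟩ := mem_pathOf.1 hp
      simp at hxp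
    · obtain ⟨j, hj, rfl⟩ := Finset.mem_image.1 hp
      simp only [Finset.mem_singleton] at hxp
      subst hxp; exact hj
  · intro hx
    exact ⟨Sum.inl x, Or.inr (Finset.mem_image.2 ⟨x, hx, rfl⟩), by simp⟩

end Bij2


section Bij3
variable {r : ℕ}

lemma Phi_valid (hr : 2 ≤ r) (m : ℕ) {V E : Finset ℕ}
    (hV : V ⊆ Finset.Icc 1 (cN r (m+3)))
    (hE : E ⊆ Finset.Icc 1 (cN r (m+4)) \ fmap r (m+4) V) :
    validColl r (m+5) (Phi V E) := by
  have hfmap := fmap_eq hr m hV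
  refine ⟨?_, ?_, ?_⟩
  · intro p hp
    rcases Finset.mem_union.1 hp with h | h
    · obtain ⟨e, he, rfl⟩ := mem_pathOf.1 h
      have he1 := start_one_le hV he
      have heV := (mem_starts.1 he).1
      have h1 := le_compEnd hV heV
      have h2 := compEnd_le hV heV
      refine ⟨by omega, ?_⟩
      have e2 : c r (m+5-2) = c r (m+3) := rfl
      rw [e2, ← cN_cast hr (m+3) (by omega)]
      exact_mod_cast h2
    · obtain ⟨j, hj, rfl⟩ := Finset.mem_image.1 h
      have := Finset.mem_sdiff.1 (hE hj)
      simp only [Finset.mem_Icc] at this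
      refine ⟨this.1.1, ?_⟩
      have e1 : c r (m+5-1) = c r (m+4) := rfl
      rw [e1, ← cN_cast hr (m+4) (by omega)]
      exact_mod_cast this.1.2
  · intro p hp q hq hne
    rcases Finset.mem_union.1 hp with h1 | h1 <;> rcases Finset.mem_union.1 hq with h2 | h2
    · exact pathOf_disj hr m hV h1 h2 hne
    · obtain ⟨j, hj, rfl⟩ := Finset.mem_image.1 h2
      have hjn := (Finset.mem_sdiff.1 (hE hj)).2
      rw [Finset.disjoint_right]
      intro x hx
      rw [edges_inl, Finset.mem_singleton] at hx
      subst hx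
      intro hxe
      exact hjn (hfmap ▸ Finset.mem_biUnion.2 ⟨p, h1, hxe⟩)
    · obtain ⟨j, hj, rfl⟩ := Finset.mem_image.1 h1
      have hjn := (Finset.mem_sdiff.1 (hE hj)).2
      rw [Finset.disjoint_left]
      intro x hx
      rw [edges_inl, Finset.mem_singleton] at hx
      subst hx
      intro hxe
      exact hjn (hfmap ▸ Finset.mem_biUnion.2 ⟨q, h2, hxe⟩)
    · obtain ⟨j, hj, rfl⟩ := Finset.mem_image.1 h1
      obtain ⟨j', hj', rfl⟩ := Finset.mem_image.1 h2
      have : j ≠ j' := by rintro rfl; exact hne rfl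
      rw [edges_inl, edges_inl]
      simp only [Finset.disjoint_singleton]
      omega
  · intro i k i' k' h1 h2
    have g1 : (Sum.inr (i, k) : Elt) ∈ pathOf V := by
      rcases Finset.mem_union.1 h1 with h | h
      · exact h
      · obtain ⟨j, -, hj⟩ := Finset.mem_image.1 h; simp at hj
    have g2 : (Sum.inr (i', k') : Elt) ∈ pathOf V := by
      rcases Finset.mem_union.1 h2 with h | h
      · exact h
      · obtain ⟨j, -, hj⟩ := Finset.mem_image.1 h; simp at hj
    obtain ⟨e, he, hpe⟩ := mem_pathOf.1 g1
    obtain ⟨e', he', hpe'⟩ := mem_pathOf.1 g2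
    simp only [Sum.inr.injEq, Prod.mk.injEq] at hpe hpe'
    obtain ⟨rfl, rfl⟩ := hpe
    obtain ⟨rfl, rfl⟩ := hpe'
    have he1 := start_one_le hV he
    have he1' := start_one_le hV he'
    have hc1 := le_compEnd hV (mem_starts.1 he).1
    have hc2 := le_compEnd hV (mem_starts.1 he').1
    rcases Nat.lt_trichotomy e e' with h | h | h
    · have := starts_gap hV he he' h
      omega
    · subst h
      omega
    · have := starts_gap hV he' he h
      omega

lemma B1_Phi {C : ℕ} {V : Finset ℕ} (hV : V ⊆ Finset.Icc 1 C) (E : Finset ℕ) :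
    B1 (Phi V E) = V.card := by
  unfold B1 Phi
  rw [Finset.sum_union Phi_disj]
  have h2 : ∑ p ∈ E.image Sum.inl, wt1 p = 0 := by
    apply Finset.sum_eq_zero
    intro p hp
    obtain ⟨j, -, rfl⟩ := Finset.mem_image.1 hp
    rfl
  rw [h2, Nat.add_zero]
  exact B1_pathOf hV

lemma edges_biUnion_Phi (hr : 2 ≤ r) (m : ℕ) {V : Finset ℕ}
    (hV : V ⊆ Finset.Icc 1 (cN r (m+3))) (E : Finset ℕ) :
    (Phi V E).biUnion (edges r (m+5)) = fmap r (m+4) V ∪ E := by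
  unfold Phi
  rw [biUnion_union_aux, fmap_eq hr m hV]
  congr 1
  ext x
  simp only [Finset.mem_biUnion, Finset.mem_image]
  constructor
  · rintro ⟨p, ⟨j, hj, rfl⟩, hx⟩
    rw [edges_inl, Finset.mem_singleton] at hx
    subst hx; exact hj
  · intro hx
    exact ⟨Sum.inl x, ⟨x, hx, rfl⟩, by rw [edges_inl]; simp⟩

lemma B2_Phi (hr : 2 ≤ r) (m : ℕ) {V E : Finset ℕ}
    (hV : V ⊆ Finset.Icc 1 (cN r (m+3)))
    (hE : E ⊆ Finset.Icc 1 (cN r (m+4)) \ fmap r (m+4) V) :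
    B2 r (m+5) (Phi V E) = (fmap r (m+4) V).card + E.card := by
  unfold B2
  rw [edges_biUnion_Phi hr m hV E]
  rw [Finset.card_union_of_disjoint]
  rw [Finset.disjoint_right]
  intro j hj
  exact (Finset.mem_sdiff.1 (hE hj)).2

lemma Ftilde_finite (m : ℕ) : (Ftilde r (m+5)).Finite := by
  apply Set.Finite.subset (Finset.finite_toSet
    (((Finset.Icc 1 (cN r (m+4))).image Sum.inl ∪
      ((Finset.Icc 0 (cN r (m+3)) ×ˢ Finset.Icc 0 (cN r (m+3))).image Sum.inr)).powerset))
  intro β hβ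
  obtain ⟨hvalid, -, -⟩ := hβ
  simp only [Finset.coe_powerset, Set.mem_preimage, Set.mem_powerset_iff, Finset.coe_subset,
    Finset.mem_coe, Finset.mem_powerset]
  intro p hp
  have hv := hvalid p hp
  match p with
  | Sum.inl j =>
    apply Finset.mem_union_left
    apply Finset.mem_image_of_mem
    simp only [Finset.mem_Icc]
    obtain ⟨hv1, hv2⟩ := hv
    have e1 : c r (m+5-1) = c r (m+4) := rfl
    rw [e1] at hv2
    have : ((j:ℤ)).toNat ≤ (c r (m+4)).toNat := Int.toNat_le_toNat hv2
    simp only [Int.toNat_natCast] at this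
    exact ⟨hv1, this⟩
  | Sum.inr (i, k) =>
    apply Finset.mem_union_right
    apply Finset.mem_image_of_mem
    obtain ⟨hv1, hv2⟩ := hv
    have e2 : c r (m+5-2) = c r (m+3) := rfl
    rw [e2] at hv2
    have hk : k ≤ cN r (m+3) := by
      have : ((k:ℤ)).toNat ≤ (c r (m+3)).toNat := Int.toNat_le_toNat hv2
      simpa [cN] using this
    simp only [Finset.mem_product, Finset.mem_Icc]
    omega

end Bij3


section GB

lemma gbinom_nat (a b : ℕ) : gbinom (a : ℤ) (b : ℤ) = (a.choose b : ℚ) := by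
  unfold gbinom
  rw [if_neg (by omega), Int.toNat_natCast]
  push_cast
  by_cases h : b ≤ a
  · have hprod : ∏ i ∈ Finset.range b, ((a : ℚ) - (i : ℚ)) = (a.descFactorial b : ℚ) := by
      rw [Nat.descFactorial_eq_prod_range, Nat.cast_prod]
      apply Finset.prod_congr rfl
      intro i hi
      rw [Finset.mem_range] at hi
      rw [Nat.cast_sub (by omega)]
    rw [hprod, Nat.descFactorial_eq_factorial_mul_choose, Nat.cast_mul]
    rw [mul_comm, mul_div_assoc, div_self (by exact_mod_cast b.factorial_ne_zero), mul_one]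
  · push_neg at h
    rw [Nat.choose_eq_zero_of_lt h]
    have hz : ∏ i ∈ Finset.range b, ((a : ℚ) - (i : ℚ)) = 0 := by
      apply Finset.prod_eq_zero (Finset.mem_range.2 h)
      ring
    rw [hz]
    simp

lemma gbinom_nonneg_eq (a : ℕ) {h : ℤ} (h0 : 0 ≤ h) :
    gbinom (a : ℤ) h = (a.choose h.toNat : ℚ) := by
  rw [← gbinom_nat a h.toNat, Int.toNat_of_nonneg h0]

lemma gbinom_zero_of_lt (a : ℕ) {h : ℤ} (hh : (a : ℤ) < h) : gbinom (a : ℤ) h = 0 := by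
  have h0 : 0 ≤ h := by omega
  rw [gbinom_nonneg_eq a h0, Nat.choose_eq_zero_of_lt (by omega)]
  simp

end GB


section Final
variable {r : ℕ}

lemma fmap_subset (hr : 2 ≤ r) (m : ℕ) {V : Finset ℕ} (hV : V ⊆ Finset.Icc 1 (cN r (m+3))) :
    fmap r (m+4) V ⊆ Finset.Icc 1 (cN r (m+4)) := by
  rw [fmap_eq hr m hV]
  intro x hx
  obtain ⟨p, hp, hxp⟩ := Finset.mem_biUnion.1 hx
  obtain ⟨e, he, rfl⟩ := mem_pathOf.1 hp
  have he1 := start_one_le hV he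
  have heV := (mem_starts.1 he).1
  have h1 := le_compEnd hV heV
  have h2 := compEnd_le hV heV
  exact edges_inr_bounds hr m (by omega) h2 hxp

lemma inner_sum (hr : 2 ≤ r) (m : ℕ) {V : Finset ℕ}
    (hV : V ⊆ Finset.Icc 1 (cN r (m+3))) :
    ∑ E ∈ (Finset.Icc 1 (cN r (m+4)) \ fmap r (m+4) V).powerset,
      x₁ ^ ((r:ℤ) * (B1 (Phi V E) : ℤ)) *
        x₂ ^ ((r:ℤ) * (c r (m+4) - (B2 r (m+5) (Phi V E) : ℤ)))
    = ∑ᶠ h : ℤ, ((gbinom (c r (m+4) - ((fmap r (m+4) V).card : ℤ)) h : ℚ) : K) *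
        x₁ ^ ((r:ℤ) * (V.card : ℤ)) *
        x₂ ^ ((r:ℤ) * (c r (m+4) - ((fmap r (m+4) V).card : ℤ) - h)) := by
  set s : Finset ℕ := Finset.Icc 1 (cN r (m+4)) \ fmap r (m+4) V with hs
  have hsub := fmap_subset hr m hV
  have hcard_le : (fmap r (m+4) V).card ≤ cN r (m+4) := by
    have := Finset.card_le_card hsub
    rwa [Nat.card_Icc, Nat.add_sub_cancel] at this
  have hscard : s.card = cN r (m+4) - (fmap r (m+4) V).card := by
    rw [hs, Finset.card_sdiff_of_subset hsub, Nat.card_Icc, Nat.add_sub_cancel]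
  have hAcast : c r (m+4) - ((fmap r (m+4) V).card : ℤ) = (s.card : ℤ) := by
    rw [hscard, ← cN_cast hr (m+4) (by omega)]
    push_cast [Nat.cast_sub hcard_le]
    ring
  set a := s.card with ha
  -- left side: rewrite weights
  have hterm : ∀ E ∈ s.powerset,
      x₁ ^ ((r:ℤ) * (B1 (Phi V E) : ℤ)) *
        x₂ ^ ((r:ℤ) * (c r (m+4) - (B2 r (m+5) (Phi V E) : ℤ)))
      = x₁ ^ ((r:ℤ) * (V.card : ℤ)) *
        x₂ ^ ((r:ℤ) * ((a : ℤ) - (E.card : ℤ))) := by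
    intro E hE
    have hEs : E ⊆ s := Finset.mem_powerset.1 hE
    rw [B1_Phi hV E, B2_Phi hr m hV hEs]
    congr 2
    have hE2 : ((fmap r (m+4) V).card + E.card : ℤ) ≥ 0 := by positivity
    push_cast
    rw [← hAcast]
    ring
  rw [Finset.sum_congr rfl hterm]
  -- group by cardinality
  rw [Finset.sum_powerset]
  have hgrp : ∀ j ∈ Finset.range (a + 1),
      ∑ E ∈ Finset.powersetCard j s,
        x₁ ^ ((r:ℤ) * (V.card : ℤ)) * x₂ ^ ((r:ℤ) * ((a : ℤ) - (E.card : ℤ)))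
      = (a.choose j : K) *
          (x₁ ^ ((r:ℤ) * (V.card : ℤ)) * x₂ ^ ((r:ℤ) * ((a : ℤ) - (j : ℤ)))) := by
    intro j hj
    have : ∀ E ∈ Finset.powersetCard j s,
        x₁ ^ ((r:ℤ) * (V.card : ℤ)) * x₂ ^ ((r:ℤ) * ((a : ℤ) - (E.card : ℤ)))
        = x₁ ^ ((r:ℤ) * (V.card : ℤ)) * x₂ ^ ((r:ℤ) * ((a : ℤ) - (j : ℤ))) := by
      intro E hE
      rw [(Finset.mem_powersetCard.1 hE).2]
    rw [Finset.sum_congr rfl this, Finset.sum_const, Finset.card_powersetCard, ha,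
      nsmul_eq_mul]
  rw [Finset.sum_congr rfl hgrp]
  -- right side: finsum to finite sum
  have hsupp : (Function.support fun h : ℤ =>
      ((gbinom (c r (m+4) - ((fmap r (m+4) V).card : ℤ)) h : ℚ) : K) *
        x₁ ^ ((r:ℤ) * (V.card : ℤ)) *
        x₂ ^ ((r:ℤ) * (c r (m+4) - ((fmap r (m+4) V).card : ℤ) - h)))
      ⊆ ((Finset.range (a+1)).image (fun t : ℕ => (t : ℤ)) : Finset ℤ) := by
    intro h hh
    rw [Function.mem_support] at hh
    have hg : gbinom (c r (m+4) - ((fmap r (m+4) V).card : ℤ)) h ≠ 0 := by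
      intro h0
      apply hh
      rw [h0]
      simp
    rw [hAcast] at hg
    have h0 : 0 ≤ h := by
      by_contra hc
      push_neg at hc
      apply hg
      unfold gbinom
      rw [if_pos hc]
    have hle : h ≤ (a : ℤ) := by
      by_contra hc
      push_neg at hc
      exact hg (gbinom_zero_of_lt a hc)
    simp only [Finset.coe_image, Set.mem_image, Finset.mem_coe, Finset.mem_range]
    exact ⟨h.toNat, by omega, Int.toNat_of_nonneg h0⟩
  rw [finsum_eq_sum_of_support_subset _ hsupp]
  apply Finset.sum_nbij' (i := fun j : ℕ => (j : ℤ)) (j := fun h : ℤ => h.toNat)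
  · intro j hj
    exact Finset.mem_image_of_mem _ hj
  · intro h hh
    obtain ⟨t, ht, rfl⟩ := Finset.mem_image.1 hh
    simpa using ht
  · intro j hj
    simp
  · intro h hh
    obtain ⟨t, ht, rfl⟩ := Finset.mem_image.1 hh
    simp
  · intro j hj
    rw [hAcast, gbinom_nat a j]
    push_cast
    ring

lemma main_sum (hr : 2 ≤ r) (m : ℕ) :
    (∑ᶠ β ∈ Ftilde r (m+5),
      x₁ ^ ((r:ℤ) * (B1 β : ℤ)) * x₂ ^ ((r:ℤ) * (c r (m+4) - (B2 r (m+5) β : ℤ))))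
    = ∑ V ∈ (Finset.Icc 1 (cN r (m+3))).powerset,
        ∑ᶠ h : ℤ,
          ((gbinom (c r (m+4) - ((fmap r (m+4) V).card : ℤ)) h : ℚ) : K) *
            x₁ ^ ((r:ℤ) * (V.card : ℤ)) *
            x₂ ^ ((r:ℤ) * (c r (m+4) - ((fmap r (m+4) V).card : ℤ) - h)) := by
  have hfin := Ftilde_finite (r := r) m
  rw [← hfin.coe_toFinset, finsum_mem_coe_finset]
  have step2 : ∀ V ∈ (Finset.Icc 1 (cN r (m+3))).powerset,
      (∑ᶠ h : ℤ,
          ((gbinom (c r (m+4) - ((fmap r (m+4) V).card : ℤ)) h : ℚ) : K) *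
            x₁ ^ ((r:ℤ) * (V.card : ℤ)) *
            x₂ ^ ((r:ℤ) * (c r (m+4) - ((fmap r (m+4) V).card : ℤ) - h)))
      = ∑ E ∈ (Finset.Icc 1 (cN r (m+4)) \ fmap r (m+4) V).powerset,
          x₁ ^ ((r:ℤ) * (B1 (Phi V E) : ℤ)) *
            x₂ ^ ((r:ℤ) * (c r (m+4) - (B2 r (m+5) (Phi V E) : ℤ))) := by
    intro V hVmem
    exact (inner_sum hr m (Finset.mem_powerset.1 hVmem)).symm
  rw [Finset.sum_congr rfl step2]
  rw [Finset.sum_sigma']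
  apply Finset.sum_nbij' (i := fun β => (⟨decodeV β, decodeE β⟩ : Σ _ : Finset ℕ, Finset ℕ))
    (j := fun σ => Phi σ.1 σ.2)
  · intro β hβ
    rw [Set.Finite.mem_toFinset] at hβ
    rw [Finset.mem_sigma]
    exact ⟨Finset.mem_powerset.2 (decodeV_subset hr m hβ),
      Finset.mem_powerset.2 (decodeE_subset hr m hβ)⟩
  · rintro ⟨V, E⟩ hσ
    rw [Finset.mem_sigma] at hσ
    rw [Set.Finite.mem_toFinset]
    exact Phi_valid hr m (Finset.mem_powerset.1 hσ.1) (Finset.mem_powerset.1 hσ.2)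
  · intro β hβ
    rw [Set.Finite.mem_toFinset] at hβ
    exact Phi_decode hr m hβ
  · rintro ⟨V, E⟩ hσ
    rw [Finset.mem_sigma] at hσ
    have h1 := decodeV_Phi (Finset.mem_powerset.1 hσ.1) E
    have h2 := decodeE_Phi (V := V) (E := E)
    simp only [h1, h2]
  · intro β hβ
    rw [Set.Finite.mem_toFinset] at hβ
    rw [Phi_decode hr m hβ]

end Final

end Aux

theorem z_succ_formula (r : ℕ) (hr : 2 ≤ r) (n : ℕ) (hn : 4 ≤ n) :
    zF r (n + 1) = x₁ ^ (-(c r n)) * x₂ ^ (-(c r (n - 1))) *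
      ∑ V ∈ (Finset.Icc 1 (cN r (n - 1))).powerset,
        ∑ᶠ h : ℤ,
          ((gbinom (c r n - ((fmap r n V).card : ℤ)) h : ℚ) : K) *
            x₁ ^ ((r : ℤ) * (V.card : ℤ)) *
            x₂ ^ ((r : ℤ) * (c r n - ((fmap r n V).card : ℤ) - h)) := by
  obtain ⟨m, rfl⟩ : ∃ m, n = m + 4 := ⟨n - 4, by omega⟩
  unfold zF
  have h0 : m + 4 + 1 = m + 5 := rfl
  have h1 : m + 5 - 1 = m + 4 := rfl
  have h2 : m + 5 - 2 = m + 3 := rfl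
  have h3 : m + 4 - 1 = m + 3 := rfl
  rw [h0, h1, h2, h3, main_sum hr m]

end CF
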